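/- Let B be a braided category, (M, Φ) a B-module category, E a braided B-module structure on (M, Φ), and A, B, C monoid objects in B. Let M ∈ M be an (A ⊗^τ B ⊗^τ C)-module, with induced actions ρ_A, ρ_B, ρ_C. Then twisting the C-action and then the B-action agrees with twisting the (B ⊗^τ C)-action: the (B⊗C)-action ρ_{B⊗C} ∘ E_{B⊗C,M} (where ρ_{B⊗C} = ρ_B ∘ Φ(B)(ρ_C) via the structure isomorphism (B⊗C)·M ≅ B·(C·M)) equals the (B⊗C)-action (ρ_B ∘ E_{B,M}) ∘ Φ(B)(ρ_C ∘ E_{C,M}); together with the unchanged A-action this makes M a (B ⊗^τ C ⊗^τ A)-module, i.e. ^B(^C M) = ^{B⊗^τ C} M. -/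

import Mathlib

open CategoryTheory MonoidalCategory

universe v u v₂ u₂

variable {𝓑 : Type u} [Category.{v} 𝓑] [MonoidalCategory 𝓑] [BraidedCategory 𝓑]
variable {𝓜 : Type u₂} [Category.{v₂} 𝓜]

/-- A (left) module category over a monoidal category `𝓑`, presented as data: an action
bifunctor together with coherent unit and associativity structure isomorphisms. -/
structure ModuleCategoryStruct (𝓑 : Type u) (𝓜 : Type u₂) [Category.{v} 𝓑]
    [MonoidalCategory 𝓑] [Category.{v₂} 𝓜] where
  act : 𝓑 ⥤ 𝓜 ⥤ 𝓜
  unitIso : act.obj (𝟙_ 𝓑) ≅ 𝟭 𝓜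
  assocIso : ∀ X Y : 𝓑, act.obj (X ⊗ Y) ≅ act.obj Y ⋙ act.obj X
  assoc_natural : ∀ {X X' Y Y' : 𝓑} (f : X ⟶ X') (g : Y ⟶ Y'),
    act.map (f ⊗ₘ g) ≫ (assocIso X' Y').hom =
      (assocIso X Y).hom ≫ CategoryTheory.Functor.whiskerRight (act.map g) (act.obj X) ≫
        CategoryTheory.Functor.whiskerLeft (act.obj Y') (act.map f)
  pentagon : ∀ X Y Z : 𝓑,
    (assocIso (X ⊗ Y) Z).hom ≫ CategoryTheory.Functor.whiskerLeft (act.obj Z) (assocIso X Y).hom =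
      act.map (α_ X Y Z).hom ≫ (assocIso X (Y ⊗ Z)).hom ≫
        CategoryTheory.Functor.whiskerRight (assocIso Y Z).hom (act.obj X)
  triangle_right : ∀ X : 𝓑,
    act.map (ρ_ X).hom =
      (assocIso X (𝟙_ 𝓑)).hom ≫ CategoryTheory.Functor.whiskerRight unitIso.hom (act.obj X)
  triangle_left : ∀ X : 𝓑,
    act.map (λ_ X).hom =
      (assocIso (𝟙_ 𝓑) X).hom ≫ CategoryTheory.Functor.whiskerLeft (act.obj X) unitIso.hom

namespace ModuleCategoryStruct

variable (D : ModuleCategoryStruct 𝓑 𝓜)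

/-- Notation helper: the action of `X : 𝓑` on `m : 𝓜`. -/
def smul (X : 𝓑) (m : 𝓜) : 𝓜 := (D.act.obj X).obj m

attribute [reducible] smul

/-- A braided `𝓑`-module structure on a module category `(𝓜, Φ)`: a family of
isomorphisms `E_{X,m} : X·m ⟶ X·m`, natural in `X` and `m`, satisfying (C1) and (C2). -/
structure BraidedModuleStructure where
  E : ∀ (X : 𝓑) (m : 𝓜), D.smul X m ⟶ D.smul X m
  iso : ∀ (X : 𝓑) (m : 𝓜), IsIso (E X m)
  nat_left : ∀ {X X' : 𝓑} (f : X ⟶ X') (m : 𝓜),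
    (D.act.map f).app m ≫ E X' m = E X m ≫ (D.act.map f).app m
  nat_right : ∀ (X : 𝓑) {m m' : 𝓜} (g : m ⟶ m'),
    (D.act.obj X).map g ≫ E X m' = E X m ≫ (D.act.obj X).map g
  C1 : ∀ (X Y : 𝓑) (m : 𝓜),
    E Y (D.smul X m) =
      (D.assocIso Y X).inv.app m ≫ (D.act.map (β_ X Y).inv).app m ≫
        (D.assocIso X Y).hom.app m ≫ (D.act.obj X).map (E Y m) ≫
        (D.assocIso X Y).inv.app m ≫ (D.act.map (β_ Y X).inv).app m ≫
        (D.assocIso Y X).hom.app m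
  C2 : ∀ (X Y : 𝓑) (m : 𝓜),
    E (Y ⊗ X) m =
      (D.assocIso Y X).hom.app m ≫ (D.act.obj Y).map (E X m) ≫ E Y (D.smul X m) ≫
        (D.assocIso Y X).inv.app m

/-- A stable structure on a braided `𝓑`-module: a natural automorphism `ς` of the
identity functor of `𝓜` with `E_{X,m} = ς_{X·m} ∘ Φ(X)(ς_m)⁻¹`. -/
structure StableStructure (Eb : D.BraidedModuleStructure) where
  ς : ∀ m : 𝓜, m ≅ m
  natural : ∀ {m m' : 𝓜} (g : m ⟶ m'), (ς m).hom ≫ g = g ≫ (ς m').hom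
  stability : ∀ (X : 𝓑) (m : 𝓜),
    Eb.E X m = (D.act.obj X).map (ς m).inv ≫ (ς (D.smul X m)).hom

/-- An `A`-module in `𝓜`, for a monoid object `A` in `𝓑`: an object `m` with a unital,
associative action `ρ : A·m ⟶ m`. -/
structure IsModuleObject (A : Mon 𝓑) (m : 𝓜) (ρ : D.smul A.X m ⟶ m) : Prop where
  unital : (D.act.map (MonObj.one (X := A.X))).app m ≫ ρ = D.unitIso.hom.app m
  assoc : (D.assocIso A.X A.X).hom.app m ≫ (D.act.obj A.X).map ρ ≫ ρ =
    (D.act.map (MonObj.mul (X := A.X))).app m ≫ ρ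

end ModuleCategoryStruct

open ModuleCategoryStruct

/-- Compatibility of an `X`-action and a `Y`-action making `m` an `(X ⊗^τ Y)`-module:
`ρ_X ∘ Φ(X)(ρ_Y) = ρ_Y ∘ Φ(Y)(ρ_X) ∘ Φ((τ_{Y,X})⁻¹)_m`. -/
def ActionsCompatible (D : ModuleCategoryStruct 𝓑 𝓜) (X Y : 𝓑) (m : 𝓜)
    (ρX : D.smul X m ⟶ m) (ρY : D.smul Y m ⟶ m) : Prop :=
  (D.assocIso X Y).hom.app m ≫ (D.act.obj X).map ρY ≫ ρX =
    (D.act.map (β_ Y X).inv).app m ≫ (D.assocIso Y X).hom.app m ≫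
      (D.act.obj Y).map ρX ≫ ρY


section Aux

variable (D : ModuleCategoryStruct 𝓑 𝓜) (Eb : D.BraidedModuleStructure)

lemma aux_E_unit (m : 𝓜) : Eb.E (𝟙_ 𝓑) m = 𝟙 _ := by
  haveI := Eb.iso (𝟙_ 𝓑) m
  have h1 : (D.act.obj (𝟙_ 𝓑)).map (D.unitIso.hom.app m)
      = D.unitIso.hom.app ((D.act.obj (𝟙_ 𝓑)).obj m) := by
    have h := D.unitIso.hom.naturality (D.unitIso.hom.app m)
    simp only [Functor.id_map] at h
    exact (cancel_mono (D.unitIso.hom.app m)).mp h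
  have h2 := Eb.nat_left (λ_ (𝟙_ 𝓑)).hom m
  rw [D.triangle_left, Eb.C2] at h2
  simp only [NatTrans.comp_app, Functor.whiskerLeft_app, Category.assoc,
    Iso.inv_hom_id_app_assoc] at h2
  -- cancel the associativity iso in front
  rw [cancel_epi ((D.assocIso (𝟙_ 𝓑) (𝟙_ 𝓑)).hom.app m)] at h2
  unfold ModuleCategoryStruct.smul at h2
  -- h2 : u.app (𝟙·m) ≫ e = F.map e ≫ E' ≫ u.app (𝟙·m)
  rw [← h1, ← Eb.nat_right (𝟙_ 𝓑) (D.unitIso.hom.app m), h1] at h2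
  simp only [Functor.id_obj] at h2
  have h3 := D.unitIso.hom.naturality (Eb.E (𝟙_ 𝓑) m)
  simp only [Functor.id_map] at h3
  unfold ModuleCategoryStruct.smul at h3
  rw [reassoc_of% h3] at h2
  rw [cancel_epi (D.unitIso.hom.app ((D.act.obj (𝟙_ 𝓑)).obj m))] at h2
  -- h2 : e = e ≫ e
  have : Eb.E (𝟙_ 𝓑) m ≫ 𝟙 _ = Eb.E (𝟙_ 𝓑) m ≫ Eb.E (𝟙_ 𝓑) m := by
    rw [Category.comp_id, ← h2]
  exact ((cancel_epi (Eb.E (𝟙_ 𝓑) m)).mp this).symm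

lemma aux_twist_isModule (A : Mon 𝓑) (m : 𝓜) (ρ : D.smul A.X m ⟶ m)
    (h : D.IsModuleObject A m ρ) : D.IsModuleObject A m (Eb.E A.X m ≫ ρ) := by
  constructor
  · rw [← Category.assoc, Eb.nat_left (MonObj.one (X := A.X)) m, aux_E_unit, Category.id_comp, h.unital]
  · rw [reassoc_of% (Eb.nat_left (MonObj.mul (X := A.X)) m), ← h.assoc, Eb.C2]
    simp only [Functor.map_comp, Category.assoc, Iso.inv_hom_id_app_assoc]
    rw [reassoc_of% (Eb.nat_right A.X ρ)]

lemma aux_twist_comp (X Y : 𝓑) (m : 𝓜) (ρX : D.smul X m ⟶ m) (ρY : D.smul Y m ⟶ m) :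
    Eb.E (X ⊗ Y) m ≫ (D.assocIso X Y).hom.app m ≫ (D.act.obj X).map ρY ≫ ρX =
      (D.assocIso X Y).hom.app m ≫ (D.act.obj X).map (Eb.E Y m ≫ ρY) ≫
        Eb.E X m ≫ ρX := by
  rw [Eb.C2 Y X m]
  simp only [Functor.map_comp, Category.assoc, Iso.inv_hom_id_app_assoc]
  rw [reassoc_of% (Eb.nat_right X ρY).symm]

lemma aux_twist_compat (X Y : 𝓑) (m : 𝓜) (ρX : D.smul X m ⟶ m) (ρY : D.smul Y m ⟶ m)
    (h : ActionsCompatible D X Y m ρX ρY) :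
    ActionsCompatible D Y X m (Eb.E Y m ≫ ρY) ρX := by
  unfold ActionsCompatible at h ⊢
  have h' : (D.act.obj X).map ρY ≫ ρX =
      (D.assocIso X Y).inv.app m ≫ (D.act.map (β_ Y X).inv).app m ≫
        (D.assocIso Y X).hom.app m ≫ (D.act.obj Y).map ρX ≫ ρY := by
    rw [← h]
    simp only [Iso.inv_hom_id_app_assoc]
  rw [Functor.map_comp]
  simp only [Category.assoc]
  rw [h', reassoc_of% (Eb.nat_right Y ρX), Eb.C1 X Y m]
  simp only [Category.assoc, Iso.hom_inv_id_app_assoc]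

end Aux

/-- for an `(A ⊗^τ B ⊗^τ C)`-module `m` with induced actions
`ρA, ρB, ρC`, twisting the `C`-action and then the `B`-action agrees with twisting the
`(B ⊗^τ C)`-action, and together with the unchanged `A`-action this makes `m` a
`(B ⊗^τ C ⊗^τ A)`-module, i.e. `^B(^C m) = ^{B ⊗^τ C} m`. -/
theorem twist_twice_eq_twist_tensor
    (D : ModuleCategoryStruct 𝓑 𝓜) (Eb : D.BraidedModuleStructure)
    (A B C : Mon 𝓑) (m : 𝓜)
    (ρA : D.smul A.X m ⟶ m) (ρB : D.smul B.X m ⟶ m) (ρC : D.smul C.X m ⟶ m)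
    (hA : D.IsModuleObject A m ρA) (hB : D.IsModuleObject B m ρB)
    (hC : D.IsModuleObject C m ρC)
    (hAB : ActionsCompatible D A.X B.X m ρA ρB)
    (hAC : ActionsCompatible D A.X C.X m ρA ρC)
    (hBC : ActionsCompatible D B.X C.X m ρB ρC) :
    -- the `(B⊗C)`-action `ρ_{B⊗C} ∘ E_{B⊗C,m}` equals the `(B⊗C)`-action
    -- `(ρ_B ∘ E_{B,m}) ∘ Φ(B)(ρ_C ∘ E_{C,m})`
    (Eb.E (B.X ⊗ C.X) m ≫ (D.assocIso B.X C.X).hom.app m ≫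
        (D.act.obj B.X).map ρC ≫ ρB =
      (D.assocIso B.X C.X).hom.app m ≫
        (D.act.obj B.X).map (Eb.E C.X m ≫ ρC) ≫ Eb.E B.X m ≫ ρB) ∧
    -- together with the unchanged `A`-action, the twisted actions make `m` a
    -- `(B ⊗^τ C ⊗^τ A)`-module
    D.IsModuleObject B m (Eb.E B.X m ≫ ρB) ∧
    D.IsModuleObject C m (Eb.E C.X m ≫ ρC) ∧
    ActionsCompatible D B.X C.X m (Eb.E B.X m ≫ ρB) (Eb.E C.X m ≫ ρC) ∧
    ActionsCompatible D B.X A.X m (Eb.E B.X m ≫ ρB) ρA ∧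
    ActionsCompatible D C.X A.X m (Eb.E C.X m ≫ ρC) ρA := by
  refine ⟨aux_twist_comp D Eb B.X C.X m ρB ρC,
    aux_twist_isModule D Eb B m ρB hB, aux_twist_isModule D Eb C m ρC hC, ?_,
    aux_twist_compat D Eb A.X B.X m ρA ρB hAB,
    aux_twist_compat D Eb A.X C.X m ρA ρC hAC⟩
  have k1 := aux_twist_comp D Eb B.X C.X m ρB ρC
  have k2 := aux_twist_comp D Eb C.X B.X m ρC ρB
  have k3 := Eb.nat_left (β_ C.X B.X).inv m
  unfold ActionsCompatible at hBC ⊢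
  rw [← k1, ← k2, reassoc_of% k3, ← hBC]
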